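/- With b := J(s_b) and I₂ : [b, ∞) → (0, s_b] the inverse of the restriction of J to (0, s_b], the function I₂ is differentiable on (b, ∞), the improper integral ∫_b^∞ (I₂′(x)/I₂(x) + θ/x) dx converges, and its value is log(c0^θ/(b^θ·s_b)). -/

import Mathlib

open MeasureTheory

/-- The map `J(s; c0, c1) = (c1*s + c0) * ((s+1)/s)^(1/θ)` for real `s`,
using the real power of the positive quantity `(s+1)/s`. -/
noncomputable def Jmap (θ c0 c1 s : ℝ) : ℝ :=
  (c1 * s + c0) * ((s + 1) / s) ^ (1 / θ)

/-- `s_b = (1−θ)/(2θ) + (1/(2θ))·√(4θ·(c0/c1) + (1−θ)²)`. -/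
noncomputable def sB (θ r : ℝ) : ℝ :=
  (1 - θ) / (2 * θ) + 1 / (2 * θ) * Real.sqrt (4 * θ * r + (1 - θ) ^ 2)

open Set Filter

noncomputable def Jd (θ c0 c1 s : ℝ) : ℝ :=
  ((s + 1) / s) ^ (1 / θ) * ((θ * c1 * s * (s + 1) - (c1 * s + c0)) / (θ * s * (s + 1)))

lemma hasDerivAt_Jmap {θ c0 c1 : ℝ} (hθ : 0 < θ) {s : ℝ} (hs : 0 < s) :
    HasDerivAt (Jmap θ c0 c1) (Jd θ c0 c1 s) s := by
  have hs1 : (0:ℝ) < s + 1 := by linarith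
  have hu : 0 < (s + 1) / s := div_pos hs1 hs
  have h1 : HasDerivAt (fun t : ℝ => (t + 1) / t) ((1 * s - (s + 1) * 1) / s ^ 2) s :=
    ((hasDerivAt_id s).add_const 1).div (hasDerivAt_id s) hs.ne'
  have h1' : HasDerivAt (fun t : ℝ => (t + 1) / t) (-(1 / s ^ 2)) s := by
    convert h1 using 1; field_simp; ring
  have h2 : HasDerivAt (fun t : ℝ => ((t + 1) / t) ^ (1 / θ))
      (-(1 / s ^ 2) * (1 / θ) * ((s + 1) / s) ^ (1 / θ - 1)) s :=
    h1'.rpow_const (Or.inl hu.ne')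
  have h3 : HasDerivAt (fun t : ℝ => c1 * t + c0) c1 s := by
    simpa using ((hasDerivAt_id s).const_mul c1).add_const c0
  have h4 : HasDerivAt (fun t : ℝ => (c1 * t + c0) * ((t + 1) / t) ^ (1 / θ))
      (c1 * ((s + 1) / s) ^ (1 / θ) + (c1 * s + c0) * (-(1 / s ^ 2) * (1 / θ) * ((s + 1) / s) ^ (1 / θ - 1))) s := h3.mul h2
  have hpow : ((s + 1) / s) ^ (1 / θ - 1) = ((s + 1) / s) ^ (1 / θ) / ((s + 1) / s) := by
    rw [Real.rpow_sub hu, Real.rpow_one]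
  have : HasDerivAt (fun t : ℝ => (c1 * t + c0) * ((t + 1) / t) ^ (1 / θ)) (Jd θ c0 c1 s) s := by
    convert h4 using 1
    rw [hpow, Jd]
    have hA : ((s + 1) / s) ^ (1 / θ) ≠ 0 := (Real.rpow_pos_of_pos hu _).ne'
    field_simp
    ring
  exact this

lemma sB_pos {θ r : ℝ} (hθ : 0 < θ) (hr : 0 < r) : 0 < sB θ r := by
  have hS0 : 0 ≤ Real.sqrt (4 * θ * r + (1 - θ) ^ 2) := Real.sqrt_nonneg _
  have hS2 : Real.sqrt (4 * θ * r + (1 - θ) ^ 2) ^ 2 = 4 * θ * r + (1 - θ) ^ 2 :=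
    Real.sq_sqrt (by nlinarith)
  have h2θ : (0:ℝ) < 2 * θ := by linarith
  have key : 0 < (1 - θ) + Real.sqrt (4 * θ * r + (1 - θ) ^ 2) := by
    nlinarith [sq_nonneg ((1 - θ) + Real.sqrt (4 * θ * r + (1 - θ) ^ 2))]
  have heq : sB θ r = ((1 - θ) + Real.sqrt (4 * θ * r + (1 - θ) ^ 2)) / (2 * θ) := by
    simp only [sB]; field_simp
  rw [heq]
  exact div_pos key h2θ

lemma Qneg {θ c0 c1 s : ℝ} (hθ : 0 < θ) (hc1 : 0 < c1) (hc01 : c1 < c0)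
    (hs : 0 < s) (hssb : s < sB θ (c0 / c1)) :
    θ * c1 * s * (s + 1) - (c1 * s + c0) < 0 := by
  have hr : 0 < c0 / c1 := div_pos (by linarith) hc1
  have hS0 : 0 ≤ Real.sqrt (4 * θ * (c0/c1) + (1 - θ) ^ 2) := Real.sqrt_nonneg _
  have hS2 : Real.sqrt (4 * θ * (c0/c1) + (1 - θ) ^ 2) ^ 2 = 4 * θ * (c0/c1) + (1 - θ) ^ 2 :=
    Real.sq_sqrt (by nlinarith)
  have h2θ : (0:ℝ) < 2 * θ := by linarith
  have hsbval : 2 * θ * sB θ (c0/c1) = (1 - θ) + Real.sqrt (4 * θ * (c0/c1) + (1 - θ) ^ 2) := by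
    simp only [sB]; field_simp
  have hsb : 2 * θ * s < (1 - θ) + Real.sqrt (4 * θ * (c0/c1) + (1 - θ) ^ 2) := by
    rw [← hsbval]; nlinarith
  have hc0 : c1 * (c0 / c1) = c0 := by field_simp
  rcases le_or_gt (2 * θ * s) (1 - θ) with h | h
  · nlinarith [mul_pos hc1 hs, mul_pos (mul_pos hθ hc1) (mul_pos hs hs)]
  · have hlt : (2 * θ * s - (1 - θ)) ^ 2 < Real.sqrt (4 * θ * (c0/c1) + (1 - θ) ^ 2) ^ 2 := by
      have h1 : 0 ≤ 2 * θ * s - (1 - θ) := by linarith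
      nlinarith
    nlinarith [mul_pos hθ hc1, mul_pos hc1 hs]

lemma Jd_neg {θ c0 c1 s : ℝ} (hθ : 0 < θ) (hc1 : 0 < c1) (hc01 : c1 < c0)
    (hs : 0 < s) (hssb : s < sB θ (c0 / c1)) : Jd θ c0 c1 s < 0 := by
  have hs1 : (0:ℝ) < s + 1 := by linarith
  have hu : 0 < (s + 1) / s := div_pos hs1 hs
  have hA : 0 < ((s + 1) / s) ^ (1 / θ) := Real.rpow_pos_of_pos hu _
  have hQ := Qneg hθ hc1 hc01 hs hssb
  have hden : 0 < θ * s * (s + 1) := by positivity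
  exact mul_neg_of_pos_of_neg hA (div_neg_of_neg_of_pos hQ hden)

lemma Jmap_pos {θ c0 c1 s : ℝ} (hc1 : 0 < c1) (hc01 : c1 < c0) (hs : 0 < s) :
    0 < Jmap θ c0 c1 s := by
  have hs1 : (0:ℝ) < s + 1 := by linarith
  have hu : 0 < (s + 1) / s := div_pos hs1 hs
  have : 0 < c1 * s + c0 := by nlinarith
  exact mul_pos this (Real.rpow_pos_of_pos hu _)

lemma Jmap_anti {θ c0 c1 : ℝ} (hθ : 0 < θ) (hc1 : 0 < c1) (hc01 : c1 < c0) :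
    StrictAntiOn (Jmap θ c0 c1) (Set.Ioc 0 (sB θ (c0 / c1))) := by
  apply strictAntiOn_of_deriv_neg (convex_Ioc _ _)
  · intro x hx
    exact (hasDerivAt_Jmap hθ hx.1).continuousAt.continuousWithinAt
  · intro x hx
    rw [interior_Ioc] at hx
    rw [(hasDerivAt_Jmap hθ hx.1).deriv]
    exact Jd_neg hθ hc1 hc01 hx.1 hx.2

lemma I2_cont {θ c0 c1 : ℝ} (hθ : 0 < θ) (hc1 : 0 < c1) (hc01 : c1 < c0)
    (I2 : ℝ → ℝ)
    (hI2 : ∀ x, Jmap θ c0 c1 (sB θ (c0 / c1)) ≤ x →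
      (0 < I2 x ∧ I2 x ≤ sB θ (c0 / c1)) ∧ Jmap θ c0 c1 (I2 x) = x) :
    ∀ x₀ ∈ Set.Ici (Jmap θ c0 c1 (sB θ (c0 / c1))),
      ContinuousWithinAt I2 (Set.Ici (Jmap θ c0 c1 (sB θ (c0 / c1)))) x₀ := by
  have hanti := Jmap_anti hθ hc1 hc01
  set sb := sB θ (c0 / c1) with hsb_def
  set b := Jmap θ c0 c1 sb with hb_def
  have hsb0 : 0 < sb := sB_pos hθ (div_pos (by linarith) hc1)
  -- comparison lemmas
  have hlt : ∀ {t y : ℝ}, t ∈ Set.Ioc 0 sb → b ≤ y → Jmap θ c0 c1 t < y → I2 y < t := by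
    intro t y ht hy hJ
    obtain ⟨⟨h1, h2⟩, h3⟩ := hI2 y hy
    by_contra hle
    push_neg at hle
    rcases eq_or_lt_of_le hle with he | hlt'
    · rw [he, h3] at hJ; exact lt_irrefl _ hJ
    · have := hanti ht ⟨h1, h2⟩ hlt'
      rw [h3] at this; linarith
  have hgt : ∀ {t y : ℝ}, t ∈ Set.Ioc 0 sb → b ≤ y → y < Jmap θ c0 c1 t → t < I2 y := by
    intro t y ht hy hJ
    obtain ⟨⟨h1, h2⟩, h3⟩ := hI2 y hy
    by_contra hle
    push_neg at hle
    rcases eq_or_lt_of_le hle with he | hlt'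
    · rw [← he, h3] at hJ; exact lt_irrefl _ hJ
    · have := hanti ⟨h1, h2⟩ ht hlt'
      rw [h3] at this; linarith
  intro x₀ hx₀
  obtain ⟨⟨hs0pos, hs0le⟩, hJx₀⟩ := hI2 x₀ hx₀
  rw [Metric.continuousWithinAt_iff]
  intro ε hε
  set s₀ := I2 x₀ with hs₀
  set ε₁ := min ε (s₀ / 2) with hε₁def
  have hε₁pos : 0 < ε₁ := lt_min hε (by linarith)
  have hε₁le : ε₁ ≤ ε := min_le_left _ _
  have hε₁half : ε₁ ≤ s₀ / 2 := min_le_right _ _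
  have hlow_mem : s₀ - ε₁ ∈ Set.Ioc 0 sb := ⟨by linarith, by linarith⟩
  have hδ₁ : x₀ < Jmap θ c0 c1 (s₀ - ε₁) := by
    have := hanti hlow_mem ⟨hs0pos, hs0le⟩ (by linarith)
    rw [hJx₀] at this; exact this
  by_cases hcase : s₀ + ε ≤ sb
  · have hup_mem : s₀ + ε ∈ Set.Ioc 0 sb := ⟨by linarith, hcase⟩
    have hδ₂ : Jmap θ c0 c1 (s₀ + ε) < x₀ := by
      have := hanti ⟨hs0pos, hs0le⟩ hup_mem (by linarith)
      rw [hJx₀] at this; exact this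
    refine ⟨min (Jmap θ c0 c1 (s₀ - ε₁) - x₀) (x₀ - Jmap θ c0 c1 (s₀ + ε)),
      lt_min (by linarith) (by linarith), ?_⟩
    intro y hy hdist
    rw [Real.dist_eq, abs_lt] at hdist
    have hy1 : y < Jmap θ c0 c1 (s₀ - ε₁) := by
      have := hdist.2; have h2 := min_le_left (Jmap θ c0 c1 (s₀ - ε₁) - x₀)
        (x₀ - Jmap θ c0 c1 (s₀ + ε)); linarith
    have hy2 : Jmap θ c0 c1 (s₀ + ε) < y := by
      have := hdist.1; have h2 := min_le_right (Jmap θ c0 c1 (s₀ - ε₁) - x₀)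
        (x₀ - Jmap θ c0 c1 (s₀ + ε)); linarith
    have h5 := hgt hlow_mem hy hy1
    have h6 := hlt hup_mem hy hy2
    rw [Real.dist_eq, abs_lt]
    constructor <;> linarith
  · refine ⟨Jmap θ c0 c1 (s₀ - ε₁) - x₀, by linarith, ?_⟩
    intro y hy hdist
    rw [Real.dist_eq, abs_lt] at hdist
    have hy1 : y < Jmap θ c0 c1 (s₀ - ε₁) := by linarith [hdist.2]
    have h5 := hgt hlow_mem hy hy1
    have h6 : I2 y < s₀ + ε := lt_of_le_of_lt (hI2 y hy).1.2 (by push_neg at hcase; linarith)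
    rw [Real.dist_eq, abs_lt]
    constructor <;> linarith

lemma I2_tendsto {θ c0 c1 : ℝ} (hθ : 0 < θ) (hc1 : 0 < c1) (hc01 : c1 < c0)
    (I2 : ℝ → ℝ)
    (hI2 : ∀ x, Jmap θ c0 c1 (sB θ (c0 / c1)) ≤ x →
      (0 < I2 x ∧ I2 x ≤ sB θ (c0 / c1)) ∧ Jmap θ c0 c1 (I2 x) = x) :
    Filter.Tendsto I2 Filter.atTop (nhds 0) := by
  have hanti := Jmap_anti hθ hc1 hc01
  set sb := sB θ (c0 / c1) with hsb_def
  set b := Jmap θ c0 c1 sb with hb_def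
  have hsb0 : 0 < sb := sB_pos hθ (div_pos (by linarith) hc1)
  rw [Metric.tendsto_atTop]
  intro ε hε
  set ε₁ := min (ε / 2) (sb / 2) with hε₁def
  have hε₁pos : 0 < ε₁ := lt_min (by linarith) (by linarith)
  have hε₁mem : ε₁ ∈ Set.Ioc 0 sb := ⟨hε₁pos, le_trans (min_le_right _ _) (by linarith)⟩
  refine ⟨max b (Jmap θ c0 c1 ε₁) + 1, fun y hy => ?_⟩
  have hyb : b ≤ y := by
    have := le_max_left b (Jmap θ c0 c1 ε₁); linarith
  have hyJ : Jmap θ c0 c1 ε₁ < y := by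
    have := le_max_right b (Jmap θ c0 c1 ε₁); linarith
  obtain ⟨⟨h1, h2⟩, h3⟩ := hI2 y hyb
  have hup : I2 y < ε₁ := by
    by_contra hle
    push_neg at hle
    rcases eq_or_lt_of_le hle with he | hlt'
    · rw [he, h3] at hyJ; exact lt_irrefl _ hyJ
    · have := hanti hε₁mem ⟨h1, h2⟩ hlt'
      rw [h3] at this; linarith
  rw [Real.dist_eq, sub_zero, abs_lt]
  constructor <;> [linarith; linarith [min_le_left (ε / 2) (sb / 2)]]

lemma halg_lemma (A Q θ s c0 c1 : ℝ) (hA : A ≠ 0) (hQe : Q = θ*c1*s*(s+1) - (c1*s+c0))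
    (hQne : Q ≠ 0) (hs : s ≠ 0) (hs1 : s+1 ≠ 0) (hc : c1*s+c0 ≠ 0) :
    c1 * (A * (Q/(θ*s*(s+1))))⁻¹ / (c1*s+c0) * θ + (A * (Q/(θ*s*(s+1))))⁻¹/(s+1)
      = (A * (Q/(θ*s*(s+1))))⁻¹/s + θ/((c1*s+c0)*A) := by
  field_simp
  subst hQe
  ring

/-- With `b := J(s_b)` and `I₂ : [b, ∞) → (0, s_b]` the inverse of the restriction
of `J` to `(0, s_b]`: `I₂` is differentiable on `(b, ∞)`, the improper integral
`∫_b^∞ (I₂′(x)/I₂(x) + θ/x) dx` converges, and equals `log(c0^θ/(b^θ·s_b))`. -/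
theorem stmt9 (θ c0 c1 : ℝ) (hθ : 0 < θ) (hc1 : 0 < c1) (hc01 : c1 < c0)
    (I2 : ℝ → ℝ)
    (hI2 : ∀ x, Jmap θ c0 c1 (sB θ (c0 / c1)) ≤ x →
      (0 < I2 x ∧ I2 x ≤ sB θ (c0 / c1)) ∧ Jmap θ c0 c1 (I2 x) = x) :
    (∀ x, Jmap θ c0 c1 (sB θ (c0 / c1)) < x → DifferentiableAt ℝ I2 x) ∧
    IntegrableOn (fun x => deriv I2 x / I2 x + θ / x)
      (Set.Ioi (Jmap θ c0 c1 (sB θ (c0 / c1)))) ∧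
    (∫ x in Set.Ioi (Jmap θ c0 c1 (sB θ (c0 / c1))), (deriv I2 x / I2 x + θ / x))
      = Real.log (c0 ^ θ / ((Jmap θ c0 c1 (sB θ (c0 / c1))) ^ θ * sB θ (c0 / c1))) := by
  have hanti := Jmap_anti hθ hc1 hc01
  have hcont := I2_cont hθ hc1 hc01 I2 hI2
  have htend0 := I2_tendsto hθ hc1 hc01 I2 hI2
  have hc0 : 0 < c0 := by linarith
  set sb := sB θ (c0 / c1) with hsb_def
  set b := Jmap θ c0 c1 sb with hb_def
  have hsb0 : 0 < sb := sB_pos hθ (div_pos hc0 hc1)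
  have hb0 : 0 < b := Jmap_pos hc1 hc01 hsb0
  have hI2b : I2 b = sb := by
    obtain ⟨⟨h1, h2⟩, h3⟩ := hI2 b le_rfl
    exact hanti.injOn ⟨h1, h2⟩ ⟨hsb0, le_rfl⟩ (h3.trans hb_def)
  have hltsb : ∀ x, b < x → I2 x < sb := by
    intro x hx
    obtain ⟨⟨h1, h2⟩, h3⟩ := hI2 x hx.le
    rcases eq_or_lt_of_le h2 with he | h
    · rw [he] at h3; rw [← hb_def] at h3; exact absurd h3 (by linarith)
    · exact h
  have hkey : ∀ x ∈ Set.Ioi b, HasDerivAt I2 (Jd θ c0 c1 (I2 x))⁻¹ x := by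
    intro x hx
    have hxb : b < x := hx
    obtain ⟨⟨h1, h2⟩, h3⟩ := hI2 x hxb.le
    have hJdat := hasDerivAt_Jmap (θ := θ) (c0 := c0) (c1 := c1) hθ h1
    have hJdne : Jd θ c0 c1 (I2 x) ≠ 0 := (Jd_neg hθ hc1 hc01 h1 (hltsb x hxb)).ne
    have hca : ContinuousAt I2 x :=
      (hcont x hxb.le).continuousAt (Ici_mem_nhds hxb)
    have hev : ∀ᶠ y in nhds x, Jmap θ c0 c1 (I2 y) = y :=
      Filter.eventually_of_mem (Ioi_mem_nhds hxb) (fun y hy => (hI2 y (le_of_lt hy)).2)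
    exact HasDerivAt.of_local_left_inverse hca hJdat hJdne hev
  set G : ℝ → ℝ := fun y => θ * Real.log (c1 * I2 y + c0) + Real.log (I2 y + 1) with hGdef
  have hGd : ∀ x ∈ Set.Ioi b, HasDerivAt G (deriv I2 x / I2 x + θ / x) x ∧
      deriv I2 x / I2 x + θ / x ≤ 0 := by
    intro x hx
    have hxb : b < x := hx
    obtain ⟨⟨h1, h2⟩, h3⟩ := hI2 x hxb.le
    set s := I2 x with hs_def
    have hssb : s < sb := hltsb x hxb
    have hs1 : (0:ℝ) < s + 1 := by linarith
    have hu : 0 < (s + 1) / s := div_pos hs1 h1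
    have hA : 0 < ((s + 1) / s) ^ (1 / θ) := Real.rpow_pos_of_pos hu _
    have hQ : θ * c1 * s * (s + 1) - (c1 * s + c0) < 0 := Qneg hθ hc1 hc01 h1 hssb
    have hJdval : Jd θ c0 c1 s =
        ((s + 1) / s) ^ (1 / θ) * ((θ * c1 * s * (s + 1) - (c1 * s + c0)) / (θ * s * (s + 1))) :=
      rfl
    have hJdneg : Jd θ c0 c1 s < 0 := Jd_neg hθ hc1 hc01 h1 hssb
    set d := (Jd θ c0 c1 s)⁻¹ with hd_def
    have hdneg : d < 0 := inv_lt_zero.mpr hJdneg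
    have hd := hkey x hx
    have hderiv_eq : deriv I2 x = d := hd.deriv
    have hc1s : 0 < c1 * s + c0 := by nlinarith
    have e1 : HasDerivAt (fun y => θ * Real.log (c1 * I2 y + c0))
        (c1 * d / (c1 * s + c0) * θ) x :=
      (((hd.const_mul c1).add_const c0).log hc1s.ne').const_mul θ |>.congr_deriv (by ring)
    have e2 : HasDerivAt (fun y => Real.log (I2 y + 1)) (d / (s + 1)) x :=
      (hd.add_const 1).log hs1.ne'
    have esum := e1.add e2
    have hxval : x = (c1 * s + c0) * ((s + 1) / s) ^ (1 / θ) := by rw [← h3]; rfl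
    have halg : c1 * d / (c1 * s + c0) * θ + d / (s + 1) = d / s + θ / x := by
      rw [hxval, hd_def, hJdval]
      exact halg_lemma _ _ θ s c0 c1 hA.ne' rfl hQ.ne h1.ne' hs1.ne' hc1s.ne'
    have hGd1 : HasDerivAt G (deriv I2 x / I2 x + θ / x) x := by
      rw [hderiv_eq, ← halg]
      exact esum
    refine ⟨hGd1, ?_⟩
    rw [hderiv_eq, ← halg]
    have t1 : c1 * d / (c1 * s + c0) * θ ≤ 0 := by
      apply mul_nonpos_of_nonpos_of_nonneg _ hθ.le
      exact div_nonpos_of_nonpos_of_nonneg (by nlinarith) hc1s.le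
    have t2 : d / (s + 1) ≤ 0 := div_nonpos_of_nonpos_of_nonneg hdneg.le hs1.le
    linarith
  have hGtend : Filter.Tendsto G Filter.atTop (nhds (θ * Real.log c0)) := by
    have l1 : ContinuousAt (fun t : ℝ => c1 * t + c0) 0 := by fun_prop
    have l3 : ContinuousAt (fun t : ℝ => t + 1) (0:ℝ) := by fun_prop
    have houter : ContinuousAt (fun t : ℝ => θ * Real.log (c1 * t + c0) + Real.log (t + 1)) 0 :=
      ((l1.log (by simp [hc0.ne'])).const_mul θ).add (l3.log (by norm_num))
    have hcomp := (houter.tendsto).comp htend0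
    simp only [Function.comp_def, mul_zero, zero_add, add_zero, Real.log_one] at hcomp
    simpa using hcomp
  have hGcontb : ContinuousWithinAt G (Set.Ici b) b := by
    have l1 : ContinuousAt (fun t : ℝ => c1 * t + c0) (I2 b) := by fun_prop
    have l3 : ContinuousAt (fun t : ℝ => t + 1) (I2 b) := by fun_prop
    have houter : ContinuousAt (fun t : ℝ => θ * Real.log (c1 * t + c0) + Real.log (t + 1))
        (I2 b) :=
      ((l1.log (by rw [hI2b]; positivity)).const_mul θ).add (l3.log (by rw [hI2b]; positivity))
    exact houter.comp_continuousWithinAt (hcont b Set.self_mem_Ici)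
  have hint := integral_Ioi_of_hasDerivAt_of_nonpos hGcontb (fun x hx => (hGd x hx).1)
    (fun x hx => (hGd x hx).2) hGtend
  have hintg := integrableOn_Ioi_deriv_of_nonpos hGcontb (fun x hx => (hGd x hx).1)
    (fun x hx => (hGd x hx).2) hGtend
  refine ⟨fun x hx => (hkey x hx).differentiableAt, hintg, ?_⟩
  rw [hint]
  have hGb : G b = θ * Real.log (c1 * sb + c0) + Real.log (sb + 1) := by
    simp only [hGdef, hI2b]
  have hu : 0 < (sb + 1) / sb := div_pos (by linarith) hsb0
  have hc1sb : 0 < c1 * sb + c0 := by positivity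
  have hlogb : Real.log b
      = Real.log (c1 * sb + c0) + 1 / θ * (Real.log (sb + 1) - Real.log sb) := by
    rw [hb_def]
    show Real.log ((c1 * sb + c0) * ((sb + 1) / sb) ^ (1 / θ)) = _
    rw [Real.log_mul hc1sb.ne' (Real.rpow_pos_of_pos hu _).ne', Real.log_rpow hu,
      Real.log_div (by linarith : sb + 1 ≠ 0) hsb0.ne']
  have hθb : θ * Real.log b
      = θ * Real.log (c1 * sb + c0) + (Real.log (sb + 1) - Real.log sb) := by
    rw [hlogb]; field_simp
  rw [Real.log_div (by positivity) (by positivity), Real.log_mul (by positivity) hsb0.ne',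
    Real.log_rpow hc0, Real.log_rpow hb0, hGb]
  linarith
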